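/- Let n ≥ 1 and let τ be the permutation of {1,…,n+1} with τ(k) = k+1 for 1 ≤ k ≤ n and τ(n+1) = 1. Then for every parity function ε : {1,…,n+1} → ℤ/2, (−1)^{τᵒ} = (−1)^{(ε(2)+⋯+ε(n+1))·ε(1)} (the exponent computed as a product of integer representatives). -/
import Mathlib


open Finset

/-- `(-1)^{σᵒ}`: the signature of the induced permutation `σᵒ` of the odd indices
(with respect to the parity function `ε`), computed as `(-1)` to the number of
inversions of `σ` among positions carrying odd values. -/
def oddSign {n : ℕ} (σ : Equiv.Perm (Fin n)) (ε : Fin n → ZMod 2) : ℤ :=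
  (-1 : ℤ) ^ (Finset.univ.filter fun q : Fin n × Fin n =>
      q.1 < q.2 ∧ ε (σ q.1) = 1 ∧ ε (σ q.2) = 1 ∧ σ q.2 < σ q.1).card

/-- Let `n ≥ 1` and let `τ` be the permutation of `{1,…,n+1}` with `τ(k) = k+1` for
`1 ≤ k ≤ n` and `τ(n+1) = 1` (written `0`-based on `Fin (n+1)`: `τ(k) = k+1` for
`k < n` and `τ(n) = 0`).  Then for every parity function `ε`,
`(−1)^{τᵒ} = (−1)^{(ε(2)+⋯+ε(n+1))·ε(1)}`. -/
theorem oddSign_rotate_up (n : ℕ) (hn : 1 ≤ n) (τ : Equiv.Perm (Fin (n + 1)))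
    (hτ : ∀ k : Fin (n + 1), (τ k : ℕ) = if (k : ℕ) = n then 0 else (k : ℕ) + 1)
    (ε : Fin (n + 1) → ZMod 2) :
    oddSign τ ε
      = (-1 : ℤ) ^ ((∑ i : Fin n, ε i.succ).val * (ε 0).val) := by
  classical
  set c := (Finset.univ.filter fun i : Fin n => ε i.succ = 1).card with hc
  -- the inversion set
  have hτsucc : ∀ i : Fin n, τ i.castSucc = i.succ := by
    intro i
    apply Fin.ext
    rw [hτ]
    simp [Fin.lt_iff_val_lt_val, Nat.ne_of_lt i.isLt]
  have hτlast : τ (Fin.last n) = 0 := by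
    apply Fin.ext
    rw [hτ]
    simp
  have hset : (Finset.univ.filter fun q : Fin (n+1) × Fin (n+1) =>
      q.1 < q.2 ∧ ε (τ q.1) = 1 ∧ ε (τ q.2) = 1 ∧ τ q.2 < τ q.1)
      = if ε 0 = 1 then
          (Finset.univ.filter fun i : Fin n => ε i.succ = 1).image
            (fun i => (i.castSucc, Fin.last n))
        else ∅ := by
    ext q
    split_ifs with h0
    · simp only [Finset.mem_filter, Finset.mem_univ, true_and, Finset.mem_image]
      constructor
      · rintro ⟨hlt, h1, h2, hinv⟩
        -- q.2 must be last
        have hq2 : q.2 = Fin.last n := by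
          by_contra hne
          have h2n : (q.2 : ℕ) ≠ n := fun h => hne (Fin.ext h)
          have h1n : (q.1 : ℕ) ≠ n := by
            have := Fin.lt_iff_val_lt_val.mp hlt
            omega
          have e1 := hτ q.1
          have e2 := hτ q.2
          rw [if_neg h1n] at e1
          rw [if_neg h2n] at e2
          have := Fin.lt_iff_val_lt_val.mp hinv
          have := Fin.lt_iff_val_lt_val.mp hlt
          omega
        have h1n : (q.1 : ℕ) < n := by
          have := Fin.lt_iff_val_lt_val.mp hlt
          rw [hq2] at this
          simpa using this
        refine ⟨⟨(q.1 : ℕ), h1n⟩, ?_, ?_⟩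
        · rw [← hτsucc ⟨(q.1 : ℕ), h1n⟩]
          have he : (⟨(q.1 : ℕ), h1n⟩ : Fin n).castSucc = q.1 := Fin.ext rfl
          rw [he]; exact h1
        · rw [Prod.ext_iff]
          exact ⟨(Fin.ext rfl).symm, hq2.symm⟩
      · rintro ⟨i, hi, rfl⟩
        refine ⟨?_, ?_, ?_, ?_⟩
        · exact Fin.lt_iff_val_lt_val.mpr (by simp [i.isLt])
        · rw [hτsucc]; exact hi
        · rw [hτlast]; exact h0
        · rw [hτlast, hτsucc]
          exact Fin.lt_iff_val_lt_val.mpr (by simp)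
    · simp only [Finset.mem_filter, Finset.notMem_empty, iff_false, not_and]
      rintro _ hlt h1 h2
      intro hinv
      -- as above q.2 = last, so ε 0 = 1, contradiction
      have hq2 : q.2 = Fin.last n := by
        by_contra hne
        have h2n : (q.2 : ℕ) ≠ n := fun h => hne (Fin.ext h)
        have h1n : (q.1 : ℕ) ≠ n := by
          have := Fin.lt_iff_val_lt_val.mp hlt
          omega
        have e1 := hτ q.1
        have e2 := hτ q.2
        rw [if_neg h1n] at e1
        rw [if_neg h2n] at e2
        have := Fin.lt_iff_val_lt_val.mp hinv
        have := Fin.lt_iff_val_lt_val.mp hlt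
        omega
      rw [hq2, hτlast] at h2
      exact h0 h2
  have hcard : (Finset.univ.filter fun q : Fin (n+1) × Fin (n+1) =>
      q.1 < q.2 ∧ ε (τ q.1) = 1 ∧ ε (τ q.2) = 1 ∧ τ q.2 < τ q.1).card
      = if ε 0 = 1 then c else 0 := by
    rw [hset]
    split_ifs with h0
    · rw [Finset.card_image_of_injective _ (fun a b h => by
        simpa [Prod.ext_iff, Fin.ext_iff] using h)]
    · simp
  -- the sum
  have hsum : (∑ i : Fin n, ε i.succ) = (c : ZMod 2) := by
    rw [hc]
    rw [← Finset.sum_filter_of_ne (p := fun i : Fin n => ε i.succ = 1)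
      (f := fun i => ε i.succ) (by
        intro i _ hne
        by_contra h
        have : ∀ x : ZMod 2, x = 0 ∨ x = 1 := by decide
        rcases this (ε i.succ) with h' | h'
        · exact hne h'
        · exact h h')]
    rw [Finset.sum_congr rfl (fun i hi => (Finset.mem_filter.mp hi).2)]
    simp
  have hval : (∑ i : Fin n, ε i.succ).val = c % 2 := by
    rw [hsum, ZMod.val_natCast]
  have hε0 : (ε 0).val = if ε 0 = 1 then 1 else 0 := by
    have : ∀ x : ZMod 2, x.val = if x = 1 then 1 else 0 := by decide
    exact this _
  unfold oddSign
  rw [hcard, hval, hε0]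
  split_ifs with h0
  · rw [mul_one]
    exact neg_one_pow_eq_pow_mod_two c
  · simp
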